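/- Let g: [0,∞) → ℝ be continuous, decreasing, with g(0) = 0 and g(x) < 0 for x > 0. Define M(g) := {A ∈ Sym(n) : tr A ≥ 0 and λ_min(A) ≥ g(tr A)}. Then M(g) is a closed set satisfying positivity (M(g) + P ⊆ M(g)), is invariant under orthogonal conjugation, satisfies M(g) ∩ {tr A = 0} = {0}, and P − {0} ⊆ interior(M(g)). -/

import Mathlib

open Pointwise Matrix

/-- The space of symmetric (self-adjoint) real `n × n` matrices. -/
abbrev SymSpace (n : ℕ) : Type := selfAdjoint (Matrix (Fin n) (Fin n) ℝ)

/-- The cone `P` of positive semidefinite symmetric matrices. -/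
def PSDcone (n : ℕ) : Set (SymSpace n) :=
  {A | (A : Matrix (Fin n) (Fin n) ℝ).PosSemidef}

/-- The Dirichlet dual `F̃ = Sym(n) \ (-interior F)`. -/
def dirDual {n : ℕ} (F : Set (SymSpace n)) : Set (SymSpace n) :=
  {A | -A ∉ interior F}

/-- The eigenvalues of a symmetric real matrix. -/
noncomputable def symEigs {n : ℕ} (A : SymSpace n) : Fin n → ℝ :=
  (show (A : Matrix (Fin n) (Fin n) ℝ).IsHermitian from A.2).eigenvalues

/-- The smallest eigenvalue of a symmetric real matrix. -/
noncomputable def lambdaMin {n : ℕ} (A : SymSpace n) : ℝ := ⨅ i, symEigs A i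

/-- The largest eigenvalue of a symmetric real matrix. -/
noncomputable def lambdaMax {n : ℕ} (A : SymSpace n) : ℝ := ⨆ i, symEigs A i

/-- The set `M(g) = {A ∈ Sym(n) : tr A ≥ 0 and λ_min(A) ≥ g(tr A)}`. -/
def Mset (n : ℕ) (g : ℝ → ℝ) : Set (SymSpace n) :=
  {A | 0 ≤ (A : Matrix (Fin n) (Fin n) ℝ).trace ∧
       g ((A : Matrix (Fin n) (Fin n) ℝ).trace) ≤ lambdaMin A}

section Aux

variable {n : ℕ}

lemma lambdaMin_le (A : SymSpace n) (i : Fin n) : lambdaMin A ≤ symEigs A i :=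
  ciInf_le (Set.Finite.bddBelow (Set.finite_range _)) i

lemma lambdaMin_of_isEmpty [IsEmpty (Fin n)] (A : SymSpace n) : lambdaMin A = 0 :=
  Real.iInf_of_isEmpty _

lemma trace_eq_sum_symEigs (A : SymSpace n) :
    (A : Matrix (Fin n) (Fin n) ℝ).trace = ∑ i, symEigs A i := by
  have hA : (A : Matrix (Fin n) (Fin n) ℝ).IsHermitian := A.2
  conv_lhs => rw [hA.spectral_theorem]
  rw [Unitary.conjStarAlgAut_apply, Matrix.trace_mul_cycle]
  rw [show (star (hA.eigenvectorUnitary : Matrix (Fin n) (Fin n) ℝ)) *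
      (hA.eigenvectorUnitary : Matrix (Fin n) (Fin n) ℝ) = 1 from
    Unitary.coe_star_mul_self _, one_mul, Matrix.trace_diagonal]
  rfl

lemma quad_eq (A : SymSpace n) (x : Fin n → ℝ) :
    ∃ y : Fin n → ℝ, x ⬝ᵥ x = y ⬝ᵥ y ∧
      x ⬝ᵥ ((A : Matrix (Fin n) (Fin n) ℝ) *ᵥ x) = ∑ i, symEigs A i * (y i)^2 := by
  have hA : (A : Matrix (Fin n) (Fin n) ℝ).IsHermitian := A.2
  set U : Matrix (Fin n) (Fin n) ℝ := (hA.eigenvectorUnitary : Matrix (Fin n) (Fin n) ℝ) with hU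
  have hstar : star U = Uᵀ := by
    ext i j; simp [Matrix.star_apply]
  have hUUt : U * Uᵀ = 1 := by
    rw [← hstar]; exact Matrix.mem_unitaryGroup_iff.mp hA.eigenvectorUnitary.2
  refine ⟨Uᵀ *ᵥ x, ?_, ?_⟩
  · rw [Matrix.dotProduct_mulVec, Matrix.vecMul_transpose, Matrix.mulVec_mulVec, hUUt,
      Matrix.one_mulVec]
  · conv_lhs => rw [hA.spectral_theorem, Unitary.conjStarAlgAut_apply, hstar]
    rw [← Matrix.mulVec_mulVec, ← Matrix.mulVec_mulVec, Matrix.dotProduct_mulVec x,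
      ← Matrix.mulVec_transpose]
    simp only [dotProduct, Matrix.mulVec_diagonal]
    refine Finset.sum_congr rfl fun i _ => ?_
    show (Uᵀ *ᵥ x) i * ((RCLike.ofReal ∘ hA.eigenvalues) i * (Uᵀ *ᵥ x) i) = _
    simp [symEigs]; ring

lemma quad_ge (A : SymSpace n) (x : Fin n → ℝ) :
    lambdaMin A * (x ⬝ᵥ x) ≤ x ⬝ᵥ ((A : Matrix (Fin n) (Fin n) ℝ) *ᵥ x) := by
  obtain ⟨y, h1, h2⟩ := quad_eq A x
  rw [h1, h2]
  have : lambdaMin A * (y ⬝ᵥ y) = ∑ i, lambdaMin A * (y i)^2 := by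
    rw [dotProduct, Finset.mul_sum]
    exact Finset.sum_congr rfl fun _ _ => by ring
  rw [this]
  exact Finset.sum_le_sum fun i _ =>
    mul_le_mul_of_nonneg_right (lambdaMin_le A i) (sq_nonneg _)

lemma dotProduct_self_nonneg (x : Fin n → ℝ) : 0 ≤ x ⬝ᵥ x :=
  Finset.sum_nonneg fun i _ => mul_self_nonneg _

lemma quad_le_of_unit (A : SymSpace n) {v : Fin n → ℝ} (hv : v ⬝ᵥ v = 1) :
    lambdaMin A ≤ v ⬝ᵥ ((A : Matrix (Fin n) (Fin n) ℝ) *ᵥ v) := by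
  have := quad_ge A v
  rwa [hv, mul_one] at this

lemma exists_min_eigvec [Nonempty (Fin n)] (A : SymSpace n) :
    ∃ v : Fin n → ℝ, v ⬝ᵥ v = 1 ∧ v ⬝ᵥ ((A : Matrix (Fin n) (Fin n) ℝ) *ᵥ v) = lambdaMin A := by
  have hA : (A : Matrix (Fin n) (Fin n) ℝ).IsHermitian := A.2
  obtain ⟨i, hi⟩ := Finite.exists_min (symEigs A)
  have hmin : lambdaMin A = symEigs A i :=
    le_antisymm (lambdaMin_le A i) (le_ciInf hi)
  have hvv : (⇑(hA.eigenvectorBasis i) : Fin n → ℝ) ⬝ᵥ ⇑(hA.eigenvectorBasis i) = 1 := by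
    have h2 := real_inner_self_eq_norm_sq (hA.eigenvectorBasis i)
    rw [hA.eigenvectorBasis.orthonormal.1 i, one_pow,
      EuclideanSpace.inner_eq_star_dotProduct, star_trivial] at h2
    convert h2.symm using 2; exact h2.symm
  refine ⟨⇑(hA.eigenvectorBasis i), hvv, ?_⟩
  rw [hA.mulVec_eigenvectorBasis, dotProduct_smul, hmin]
  show symEigs A i • _ = _
  rw [hvv]; simp

lemma posSemidef_iff_lambdaMin (A : SymSpace n) :
    (A : Matrix (Fin n) (Fin n) ℝ).PosSemidef ↔ 0 ≤ lambdaMin A := by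
  constructor
  · intro h
    cases isEmpty_or_nonempty (Fin n)
    · rw [lambdaMin_of_isEmpty]
    · exact le_ciInf fun i => h.eigenvalues_nonneg i
  · intro h
    refine Matrix.PosSemidef.of_dotProduct_mulVec_nonneg A.2 (fun x => ?_)
    rw [star_trivial]
    exact le_trans (mul_nonneg h (dotProduct_self_nonneg x)) (quad_ge A x)

lemma trace_nonneg_of_psd (A : SymSpace n)
    (h : (A : Matrix (Fin n) (Fin n) ℝ).PosSemidef) :
    0 ≤ (A : Matrix (Fin n) (Fin n) ℝ).trace := by
  rw [trace_eq_sum_symEigs]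
  exact Finset.sum_nonneg fun i _ => h.eigenvalues_nonneg i

lemma lambdaMin_add_psd (A B : SymSpace n)
    (hB : (B : Matrix (Fin n) (Fin n) ℝ).PosSemidef) :
    lambdaMin A ≤ lambdaMin (A + B) := by
  cases isEmpty_or_nonempty (Fin n)
  · rw [lambdaMin_of_isEmpty, lambdaMin_of_isEmpty]
  · obtain ⟨v, hv1, hv2⟩ := exists_min_eigvec (A + B)
    have hcoe : ((A + B : SymSpace n) : Matrix (Fin n) (Fin n) ℝ)
        = (A : Matrix (Fin n) (Fin n) ℝ) + (B : Matrix (Fin n) (Fin n) ℝ) := rfl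
    rw [hcoe, Matrix.add_mulVec, dotProduct_add] at hv2
    have h1 : lambdaMin A ≤ v ⬝ᵥ ((A : Matrix (Fin n) (Fin n) ℝ) *ᵥ v) := quad_le_of_unit A hv1
    have h2 : 0 ≤ v ⬝ᵥ ((B : Matrix (Fin n) (Fin n) ℝ) *ᵥ v) := by
      have := hB.dotProduct_mulVec_nonneg v; rwa [star_trivial] at this
    linarith
lemma conj_le (A B : SymSpace n) (Q : Matrix (Fin n) (Fin n) ℝ) (hQ : Qᵀ * Q = 1)
    (hB : (B : Matrix (Fin n) (Fin n) ℝ) = Qᵀ * (A : Matrix (Fin n) (Fin n) ℝ) * Q) :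
    lambdaMin A ≤ lambdaMin B := by
  cases isEmpty_or_nonempty (Fin n)
  · rw [lambdaMin_of_isEmpty, lambdaMin_of_isEmpty]
  · obtain ⟨v, hv1, hv2⟩ := exists_min_eigvec B
    rw [hB] at hv2
    have key : v ⬝ᵥ ((Qᵀ * (A : Matrix (Fin n) (Fin n) ℝ) * Q) *ᵥ v)
        = (Q *ᵥ v) ⬝ᵥ ((A : Matrix (Fin n) (Fin n) ℝ) *ᵥ (Q *ᵥ v)) := by
      rw [← Matrix.mulVec_mulVec, ← Matrix.mulVec_mulVec, Matrix.dotProduct_mulVec v,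
        Matrix.vecMul_transpose]
    have hQv : (Q *ᵥ v) ⬝ᵥ (Q *ᵥ v) = 1 := by
      rw [Matrix.dotProduct_mulVec, ← Matrix.mulVec_transpose, Matrix.mulVec_mulVec, hQ,
        Matrix.one_mulVec, hv1]
    rw [key] at hv2
    rw [← hv2]
    have := quad_ge A (Q *ᵥ v)
    rwa [hQv, mul_one] at this

lemma lambdaMin_conj (A B : SymSpace n) (Q : Matrix (Fin n) (Fin n) ℝ) (hQ : Qᵀ * Q = 1)
    (hB : (B : Matrix (Fin n) (Fin n) ℝ) = Qᵀ * (A : Matrix (Fin n) (Fin n) ℝ) * Q) :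
    lambdaMin B = lambdaMin A := by
  have hQQ : Q * Qᵀ = 1 := mul_eq_one_comm.mp hQ
  refine le_antisymm (conj_le B A Qᵀ ?_ ?_) (conj_le A B Q hQ hB)
  · rw [Matrix.transpose_transpose]; exact hQQ
  · rw [Matrix.transpose_transpose, hB]
    have h2 : Q * (Qᵀ * (A : Matrix (Fin n) (Fin n) ℝ) * Q) * Qᵀ
        = (Q * Qᵀ) * (A : Matrix (Fin n) (Fin n) ℝ) * (Q * Qᵀ) := by
      simp only [Matrix.mul_assoc]
    rw [h2, hQQ, one_mul, mul_one]

lemma trace_conj (A B : SymSpace n) (Q : Matrix (Fin n) (Fin n) ℝ) (hQ : Qᵀ * Q = 1)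
    (hB : (B : Matrix (Fin n) (Fin n) ℝ) = Qᵀ * (A : Matrix (Fin n) (Fin n) ℝ) * Q) :
    (B : Matrix (Fin n) (Fin n) ℝ).trace = (A : Matrix (Fin n) (Fin n) ℝ).trace := by
  have hQQ : Q * Qᵀ = 1 := mul_eq_one_comm.mp hQ
  rw [hB, Matrix.trace_mul_cycle, hQQ, one_mul]

lemma abs_quad_le (C : Matrix (Fin n) (Fin n) ℝ) {v : Fin n → ℝ} (hv : v ⬝ᵥ v = 1) :
    |v ⬝ᵥ (C *ᵥ v)| ≤ ∑ i, ∑ j, |C i j| := by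
  have hv1 : ∀ i, |v i| ≤ 1 := by
    intro i
    rw [abs_le_one_iff_mul_self_le_one]
    calc v i * v i ≤ ∑ j, v j * v j :=
          Finset.single_le_sum (fun j _ => mul_self_nonneg (v j)) (Finset.mem_univ i)
      _ = 1 := hv
  calc |v ⬝ᵥ (C *ᵥ v)| ≤ ∑ i, |v i * (C *ᵥ v) i| := Finset.abs_sum_le_sum_abs _ _
    _ ≤ ∑ i, ∑ j, |C i j| := by
        refine Finset.sum_le_sum fun i _ => ?_
        rw [abs_mul]
        calc |v i| * |(C *ᵥ v) i| ≤ 1 * |(C *ᵥ v) i| :=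
              mul_le_mul_of_nonneg_right (hv1 i) (abs_nonneg _)
          _ = |∑ j, C i j * v j| := by rw [one_mul]; rfl
          _ ≤ ∑ j, |C i j * v j| := Finset.abs_sum_le_sum_abs _ _
          _ ≤ ∑ j, |C i j| := by
              refine Finset.sum_le_sum fun j _ => ?_
              rw [abs_mul]
              calc |C i j| * |v j| ≤ |C i j| * 1 :=
                    mul_le_mul_of_nonneg_left (hv1 j) (abs_nonneg _)
                _ = |C i j| := mul_one _

lemma lambdaMin_bound (A B : SymSpace n) :
    lambdaMin A ≤ lambdaMin B
      + ∑ i, ∑ j, |((A : Matrix (Fin n) (Fin n) ℝ) - (B : Matrix (Fin n) (Fin n) ℝ)) i j| := by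
  cases isEmpty_or_nonempty (Fin n)
  · rw [lambdaMin_of_isEmpty, lambdaMin_of_isEmpty]
    simp
  · obtain ⟨v, hv1, hv2⟩ := exists_min_eigvec B
    have h1 : lambdaMin A ≤ v ⬝ᵥ ((A : Matrix (Fin n) (Fin n) ℝ) *ᵥ v) := quad_le_of_unit A hv1
    have h3 : v ⬝ᵥ ((A : Matrix (Fin n) (Fin n) ℝ) *ᵥ v)
        = v ⬝ᵥ ((B : Matrix (Fin n) (Fin n) ℝ) *ᵥ v)
          + v ⬝ᵥ (((A : Matrix (Fin n) (Fin n) ℝ) - (B : Matrix (Fin n) (Fin n) ℝ)) *ᵥ v) := by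
      rw [Matrix.sub_mulVec, dotProduct_sub]; ring
    have h4 := abs_quad_le ((A : Matrix (Fin n) (Fin n) ℝ) - (B : Matrix (Fin n) (Fin n) ℝ)) hv1
    have h5 := abs_le.mp h4
    rw [h3, hv2] at h1
    linarith [h5.2]

lemma continuous_entry (i j : Fin n) :
    Continuous (fun A : SymSpace n => (A : Matrix (Fin n) (Fin n) ℝ) i j) := by
  exact continuous_subtype_val.matrix_elem i j

lemma continuous_lambdaMin : Continuous (lambdaMin : SymSpace n → ℝ) := by
  rw [continuous_iff_continuousAt]
  intro A₀
  set N : SymSpace n → ℝ := fun A =>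
    ∑ i, ∑ j, |((A : Matrix (Fin n) (Fin n) ℝ) - (A₀ : Matrix (Fin n) (Fin n) ℝ)) i j| with hN
  have hNc : Continuous N := by
    refine continuous_finset_sum _ fun i _ => continuous_finset_sum _ fun j _ => ?_
    have : Continuous (fun A : SymSpace n =>
        ((A : Matrix (Fin n) (Fin n) ℝ) - (A₀ : Matrix (Fin n) (Fin n) ℝ)) i j) := by
      exact (continuous_entry i j).sub continuous_const
    exact this.abs
  have hN0 : N A₀ = 0 := by simp [hN]
  have hb : ∀ A : SymSpace n, ‖lambdaMin A - lambdaMin A₀‖ ≤ N A := by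
    intro A
    rw [Real.norm_eq_abs, abs_le]
    constructor
    · have := lambdaMin_bound A₀ A
      have he : ∑ i, ∑ j, |((A₀ : Matrix (Fin n) (Fin n) ℝ) - (A : Matrix (Fin n) (Fin n) ℝ)) i j|
          = N A := by
        simp only [hN]
        refine Finset.sum_congr rfl fun i _ => Finset.sum_congr rfl fun j _ => ?_
        rw [Matrix.sub_apply, Matrix.sub_apply, abs_sub_comm]
      rw [he] at this
      linarith
    · have := lambdaMin_bound A A₀
      linarith
  have key : Filter.Tendsto (fun A => lambdaMin A - lambdaMin A₀) (nhds A₀) (nhds 0) := by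
    refine squeeze_zero_norm hb ?_
    have := hNc.tendsto A₀
    rwa [hN0] at this
  have := key.add_const (lambdaMin A₀)
  simpa [ContinuousAt] using this

lemma continuous_traceS : Continuous (fun A : SymSpace n => (A : Matrix (Fin n) (Fin n) ℝ).trace) := by
  refine continuous_finset_sum _ fun i _ => continuous_entry i i

lemma psd_trace_zero (A : SymSpace n) (h : (A : Matrix (Fin n) (Fin n) ℝ).PosSemidef)
    (ht : (A : Matrix (Fin n) (Fin n) ℝ).trace = 0) : A = 0 := by
  have hA : (A : Matrix (Fin n) (Fin n) ℝ).IsHermitian := A.2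
  have hsum : ∑ i, symEigs A i = 0 := by rw [← trace_eq_sum_symEigs, ht]
  have he : ∀ i ∈ Finset.univ, symEigs A i = 0 :=
    (Finset.sum_eq_zero_iff_of_nonneg fun i _ => h.eigenvalues_nonneg i).mp hsum
  have hd : (RCLike.ofReal ∘ hA.eigenvalues : Fin n → ℝ) = fun _ => 0 := by
    funext i
    show hA.eigenvalues i = 0
    exact he i (Finset.mem_univ i)
  have : (A : Matrix (Fin n) (Fin n) ℝ) = 0 := by
    conv_lhs => rw [hA.spectral_theorem]
    rw [hd, Matrix.diagonal_zero, Unitary.conjStarAlgAut_apply, Matrix.mul_zero, Matrix.zero_mul]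
  exact Subtype.ext this

end Aux

theorem Mg_subequation (n : ℕ) (g : ℝ → ℝ)
    (hg_cont : ContinuousOn g (Set.Ici 0))
    (hg_anti : AntitoneOn g (Set.Ici 0))
    (hg0 : g 0 = 0) (hg_neg : ∀ x : ℝ, 0 < x → g x < 0) :
    IsClosed (Mset n g) ∧
    Mset n g + PSDcone n ⊆ Mset n g ∧
    (∀ (A B : SymSpace n) (Q : Matrix (Fin n) (Fin n) ℝ), Qᵀ * Q = 1 →
      (B : Matrix (Fin n) (Fin n) ℝ) = Qᵀ * (A : Matrix (Fin n) (Fin n) ℝ) * Q →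
        (A ∈ Mset n g ↔ B ∈ Mset n g)) ∧
    Mset n g ∩ {A : SymSpace n | (A : Matrix (Fin n) (Fin n) ℝ).trace = 0} = {0} ∧
    PSDcone n \ {0} ⊆ interior (Mset n g) := by
  have htr := continuous_traceS (n := n)
  have hlm := continuous_lambdaMin (n := n)
  refine ⟨?_, ?_, ?_, ?_, ?_⟩
  · -- closed
    have heq : Mset n g = {A : SymSpace n | 0 ≤ (A : Matrix (Fin n) (Fin n) ℝ).trace}
        ∩ (fun A : SymSpace n => lambdaMin A - g ((A : Matrix (Fin n) (Fin n) ℝ).trace))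
            ⁻¹' (Set.Ici 0) := by
      ext A
      simp only [Mset, Set.mem_inter_iff, Set.mem_setOf_eq, Set.mem_preimage, Set.mem_Ici,
        sub_nonneg]
    rw [heq]
    refine ContinuousOn.preimage_isClosed_of_isClosed ?_ ?_ isClosed_Ici
    · exact hlm.continuousOn.sub (hg_cont.comp htr.continuousOn fun A hA => hA)
    · exact isClosed_Ici.preimage htr
  · -- positivity
    rintro C hC
    rw [Set.mem_add] at hC
    obtain ⟨A, hA, B, hB, rfl⟩ := hC
    obtain ⟨hA1, hA2⟩ := hA
    have hBpsd : (B : Matrix (Fin n) (Fin n) ℝ).PosSemidef := hB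
    have hcoe : ((A + B : SymSpace n) : Matrix (Fin n) (Fin n) ℝ)
        = (A : Matrix (Fin n) (Fin n) ℝ) + (B : Matrix (Fin n) (Fin n) ℝ) := rfl
    have htrB : 0 ≤ (B : Matrix (Fin n) (Fin n) ℝ).trace := trace_nonneg_of_psd B hBpsd
    have htrAB : ((A + B : SymSpace n) : Matrix (Fin n) (Fin n) ℝ).trace
        = (A : Matrix (Fin n) (Fin n) ℝ).trace + (B : Matrix (Fin n) (Fin n) ℝ).trace := by
      rw [hcoe, Matrix.trace_add]
    constructor
    · rw [htrAB]; linarith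
    · rw [htrAB]
      have h1 : g ((A : Matrix (Fin n) (Fin n) ℝ).trace + (B : Matrix (Fin n) (Fin n) ℝ).trace)
          ≤ g ((A : Matrix (Fin n) (Fin n) ℝ).trace) :=
        hg_anti hA1 (by simp only [Set.mem_Ici]; linarith) (by linarith)
      exact le_trans (le_trans h1 hA2) (lambdaMin_add_psd A B hBpsd)
  · -- conjugation
    intro A B Q hQ hB
    have h1 := lambdaMin_conj A B Q hQ hB
    have h2 := trace_conj A B Q hQ hB
    simp only [Mset, Set.mem_setOf_eq, h1, h2]
  · -- trace zero
    ext A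
    simp only [Set.mem_inter_iff, Set.mem_setOf_eq, Set.mem_singleton_iff, Mset]
    constructor
    · rintro ⟨⟨htr0, hlam⟩, ht⟩
      rw [ht, hg0] at hlam
      exact psd_trace_zero A ((posSemidef_iff_lambdaMin A).mpr hlam) ht
    · rintro rfl
      have h0 : ((0 : SymSpace n) : Matrix (Fin n) (Fin n) ℝ) = 0 := rfl
      have hpsd : ((0 : SymSpace n) : Matrix (Fin n) (Fin n) ℝ).PosSemidef := by
        rw [h0]; exact Matrix.PosSemidef.zero
      have hl := (posSemidef_iff_lambdaMin 0).mp hpsd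
      refine ⟨⟨?_, ?_⟩, ?_⟩ <;> simp [h0, Matrix.trace_zero, hg0, hl]
  · -- interior
    intro A hA
    obtain ⟨hApsd, hAne⟩ := hA
    have hApsd' : (A : Matrix (Fin n) (Fin n) ℝ).PosSemidef := hApsd
    have htrA : 0 < (A : Matrix (Fin n) (Fin n) ℝ).trace := by
      rcases lt_or_eq_of_le (trace_nonneg_of_psd A hApsd') with h | h
      · exact h
      · exact absurd (psd_trace_zero A hApsd' h.symm) hAne
    set T : Set (SymSpace n) :=
      (fun A : SymSpace n => (A : Matrix (Fin n) (Fin n) ℝ).trace) ⁻¹' (Set.Ioi 0) with hT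
    set U : Set (SymSpace n) := T ∩
      (fun A : SymSpace n => lambdaMin A - g ((A : Matrix (Fin n) (Fin n) ℝ).trace))
        ⁻¹' (Set.Ioi 0) with hUdef
    have hTopen : IsOpen T := isOpen_Ioi.preimage htr
    have hUopen : IsOpen U := by
      refine ContinuousOn.isOpen_inter_preimage ?_ hTopen isOpen_Ioi
      refine hlm.continuousOn.sub (hg_cont.comp htr.continuousOn fun X hX => Set.mem_Ici.mpr (le_of_lt hX))
    have hUsub : U ⊆ Mset n g := by
      rintro X ⟨hX1, hX2⟩
      simp only [Set.mem_preimage, Set.mem_Ioi, sub_pos] at hX1 hX2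
      exact ⟨le_of_lt hX1, le_of_lt hX2⟩
    have hAU : A ∈ U := by
      refine ⟨htrA, ?_⟩
      simp only [Set.mem_preimage, Set.mem_Ioi, sub_pos]
      exact lt_of_lt_of_le (hg_neg _ htrA) ((posSemidef_iff_lambdaMin A).mp hApsd')
    exact interior_maximal hUsub hUopen hAU
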